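/- If α₁ is an integer and β₁ is a rational number with β₁ > 1, and β₂ = 2/(((β₁+i)/(β₁-i))^α₁ - i) - i is well defined (the denominator is nonzero), then β₂ is a real rational number, i.e., β₂ lies in ℚ viewed inside ℂ. -/

import Mathlib

open Complex

lemma circ_pow (a b : ℚ) (hab : a^2 + b^2 = 1) (α : ℤ) :
    ∃ x y : ℚ, ((a:ℂ) + b*Complex.I)^α = x + y*Complex.I ∧ x^2 + y^2 = 1 := by
  have hz : (a:ℂ) + b*Complex.I ≠ 0 := by
    intro h
    have ha : a = 0 := by
      have := congrArg Complex.re h; simpa using this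
    have hb : b = 0 := by
      have := congrArg Complex.im h; simpa using this
    rw [ha, hb] at hab; norm_num at hab
  have hinv : ((a:ℂ) + b*Complex.I)⁻¹ = (a:ℂ) - b*Complex.I := by
    apply inv_eq_of_mul_eq_one_right
    have h2 : ((a:ℂ)+b*Complex.I)*((a:ℂ)-b*Complex.I) = ((a^2 + b^2 : ℚ) : ℂ) := by
      push_cast
      ring_nf
      rw [Complex.I_sq]
      ring
    rw [h2, hab]; norm_num
  induction α using Int.induction_on with
  | zero => exact ⟨1, 0, by norm_num, by norm_num⟩
  | succ k ih =>
    obtain ⟨x, y, hxy, hn⟩ := ih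
    refine ⟨x*a - y*b, x*b + y*a, ?_, ?_⟩
    · rw [zpow_add_one₀ hz, hxy]; push_cast
      linear_combination ((y:ℂ)*(b:ℂ)) * Complex.I_sq
    · nlinarith [hab, hn]
  | pred k ih =>
    obtain ⟨x, y, hxy, hn⟩ := ih
    refine ⟨x*a + y*b, -x*b + y*a, ?_, ?_⟩
    · rw [show (-(k:ℤ) - 1) = (-(k:ℤ)) - 1 by ring, zpow_sub_one₀ hz, hxy, hinv]
      push_cast
      linear_combination (-(y:ℂ)*(b:ℂ)) * Complex.I_sq
    · nlinarith [hab, hn]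

theorem beta2_rational (α₁ : ℤ) (β₁ : ℚ) (h₁ : 1 < β₁)
    (hden : (((β₁ : ℂ) + Complex.I) / ((β₁ : ℂ) - Complex.I)) ^ α₁ - Complex.I ≠ 0) :
    ∃ q : ℚ,
      2 / ((((β₁ : ℂ) + Complex.I) / ((β₁ : ℂ) - Complex.I)) ^ α₁ - Complex.I) - Complex.I
        = (q : ℂ) := by
  set a : ℚ := (β₁^2 - 1)/(β₁^2 + 1) with ha
  set b : ℚ := 2*β₁/(β₁^2 + 1) with hb
  have hd : β₁^2 + 1 ≠ 0 := by positivity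
  have hab : a^2 + b^2 = 1 := by
    rw [ha, hb]; field_simp; ring
  have hbi : (β₁ : ℂ) - Complex.I ≠ 0 := by
    intro h
    have := congrArg Complex.im h; simpa using this
  have hzeq : ((β₁ : ℂ) + Complex.I) / ((β₁ : ℂ) - Complex.I) = (a:ℂ) + b*Complex.I := by
    rw [div_eq_iff hbi, ha, hb]
    have hdC : ((β₁:ℂ)^2 + 1) ≠ 0 := by
      intro h
      have h2 : ((β₁^2 + 1 : ℚ) : ℂ) = 0 := by push_cast; linear_combination h
      exact hd (by exact_mod_cast h2)
    push_cast
    field_simp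
    ring_nf
    rw [Complex.I_sq]
    ring
  obtain ⟨x, y, hxy, hn⟩ := circ_pow a b hab α₁
  rw [hzeq, hxy] at hden ⊢
  have hy1 : y ≠ 1 := by
    intro hy
    have hx : x = 0 := by nlinarith [hn, sq_nonneg x]
    apply hden
    rw [hx, hy]; push_cast; ring
  refine ⟨x/(1-y), ?_⟩
  have h1y : (1:ℂ) - (y:ℂ) ≠ 0 := by
    intro h
    apply hy1
    have : ((1 - y : ℚ) : ℂ) = 0 := by push_cast; linear_combination h
    have := (Rat.cast_eq_zero (α := ℂ)).mp this
    linarith [sub_eq_zero.mp this]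
  have hD : (x:ℂ) + y*Complex.I - Complex.I ≠ 0 := hden
  have hnC : (x:ℂ)^2 + (y:ℂ)^2 = 1 := by exact_mod_cast hn
  rw [sub_eq_iff_eq_add, div_eq_iff hD]
  push_cast
  rw [div_add' _ _ _ h1y, div_mul_eq_mul_div, eq_comm, div_eq_iff h1y]
  linear_combination (-(1-(y:ℂ))^2) * Complex.I_sq + hnC
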